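/- Let X be a Polish topological vector space and let T₁, T₂ be continuous linear operators on X. If T₁ and T₂ share a non-zero periodic point (i.e., there exist x ∈ X, x ≠ 0, and d₁, d₂ ≥ 1 with T₁^{d₁} x = x and T₂^{d₂} x = x), then T₁ and T₂ are not orthogonal: there exist Borel probability measures m₁, m₂ on X with m₁ T₁-invariant, m₂ T₂-invariant, m₁({0}) = 0 = m₂({0}), such that m₁ and m₂ are not mutually singular. -/

import Mathlib

open MeasureTheory Filter ENNReal

lemma orbit_measure_aux {X : Type*} [MeasurableSpace X] [Zero X]
    [MeasurableSingletonClass X]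
    (T : X → X) (hT : Measurable T) (hT0 : T 0 = 0)
    (x : X) (hx : x ≠ 0) (d : ℕ) (hd : 1 ≤ d) (hdx : T^[d] x = x) :
    ∃ μ : Measure X, IsProbabilityMeasure μ ∧
      (∀ A : Set X, MeasurableSet A → μ (T ⁻¹' A) = μ A) ∧
      μ {0} = 0 ∧
      (∀ s : Set X, MeasurableSet s → μ s = 0 → x ∉ s) ∧
      (∀ s : Set X, MeasurableSet s → x ∈ s → μ s ≠ 0) := by
  set μ : Measure X := (d : ℝ≥0∞)⁻¹ • ∑ i ∈ Finset.range d, Measure.dirac (T^[i] x) with hμ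
  have hd0 : (d : ℝ≥0∞) ≠ 0 := by exact_mod_cast Nat.one_le_iff_ne_zero.mp hd
  have hdtop : (d : ℝ≥0∞) ≠ ⊤ := ENNReal.natCast_ne_top d
  have hiter : ∀ i ≤ d, T^[i] x ≠ 0 := by
    intro i hi h0
    have : T^[d] x = 0 := by
      have : T^[d - i + i] x = 0 := by
        rw [Function.iterate_add_apply, h0, Function.iterate_fixed hT0]
      rwa [Nat.sub_add_cancel hi] at this
    exact hx (hdx ▸ this)
  have happ : ∀ s : Set X, MeasurableSet s →
      μ s = (d : ℝ≥0∞)⁻¹ * ∑ i ∈ Finset.range d, s.indicator (1 : X → ℝ≥0∞) (T^[i] x) := by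
    intro s hs
    simp [hμ, Measure.coe_finset_sum, Measure.dirac_apply' _ hs]
  refine ⟨μ, ?_, ?_, ?_, ?_, ?_⟩
  · constructor
    rw [happ _ MeasurableSet.univ]
    simp [ENNReal.inv_mul_cancel hd0 hdtop]
  · intro A hA
    rw [happ _ (hT hA), happ _ hA]
    congr 1
    have key : ∀ i, (T ⁻¹' A).indicator (1 : X → ℝ≥0∞) (T^[i] x)
        = A.indicator (1 : X → ℝ≥0∞) (T^[i + 1] x) := by
      intro i
      rw [Function.iterate_succ_apply']
      by_cases h : T (T^[i] x) ∈ A <;> simp [Set.indicator, h, Set.mem_preimage]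
    set g : ℕ → ℝ≥0∞ := fun i => A.indicator (1 : X → ℝ≥0∞) (T^[i] x) with hg
    have hgd : g d = g 0 := by simp [hg, hdx]
    have hg0top : g 0 ≠ ⊤ := by
      simp only [hg]
      by_cases h : x ∈ A <;> simp [Set.indicator, h]
    calc ∑ i ∈ Finset.range d, (T ⁻¹' A).indicator (1 : X → ℝ≥0∞) (T^[i] x)
        = ∑ i ∈ Finset.range d, g (i + 1) := by
          exact Finset.sum_congr rfl fun i _ => key i
      _ = ∑ i ∈ Finset.range d, g i := by
          have h1 : ∑ i ∈ Finset.range (d + 1), g i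
              = ∑ i ∈ Finset.range d, g (i + 1) + g 0 := Finset.sum_range_succ' g d
          have h2 : ∑ i ∈ Finset.range (d + 1), g i
              = ∑ i ∈ Finset.range d, g i + g d := Finset.sum_range_succ g d
          rw [hgd] at h2
          exact (ENNReal.add_left_inj hg0top).mp (h1.symm.trans h2)
  · rw [happ _ (measurableSet_singleton 0)]
    have : ∀ i ∈ Finset.range d, ({0} : Set X).indicator (1 : X → ℝ≥0∞) (T^[i] x) = 0 := by
      intro i hi
      simp [Set.indicator, hiter i (Finset.mem_range.mp hi).le]
    rw [Finset.sum_congr rfl this]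
    simp
  · intro s hs h0 hxs
    rw [happ _ hs] at h0
    rcases mul_eq_zero.mp h0 with h | h
    · exact (ENNReal.inv_ne_zero.mpr hdtop) h
    · have := Finset.sum_eq_zero_iff.mp h 0 (Finset.mem_range.mpr (by omega))
      simp [Set.indicator, hxs] at this
  · intro s hs hxs h0
    rw [happ _ hs] at h0
    rcases mul_eq_zero.mp h0 with h | h
    · exact (ENNReal.inv_ne_zero.mpr hdtop) h
    · have := Finset.sum_eq_zero_iff.mp h 0 (Finset.mem_range.mpr (by omega))
      simp [Set.indicator, hxs] at this

theorem not_orthogonal_of_common_periodic_point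
    {𝕂 : Type*} [RCLike 𝕂] {X : Type*} [AddCommGroup X] [Module 𝕂 X]
    [TopologicalSpace X] [IsTopologicalAddGroup X] [ContinuousSMul 𝕂 X]
    [PolishSpace X] [MeasurableSpace X] [BorelSpace X]
    (T₁ T₂ : X → X) (h₁lin : IsLinearMap 𝕂 T₁) (h₁cont : Continuous T₁)
    (h₂lin : IsLinearMap 𝕂 T₂) (h₂cont : Continuous T₂)
    (hper : ∃ x : X, x ≠ 0 ∧ (∃ d₁ : ℕ, 1 ≤ d₁ ∧ T₁^[d₁] x = x) ∧
      (∃ d₂ : ℕ, 1 ≤ d₂ ∧ T₂^[d₂] x = x)) :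
    ∃ m₁ m₂ : Measure X, IsProbabilityMeasure m₁ ∧ IsProbabilityMeasure m₂ ∧
      (∀ A : Set X, MeasurableSet A → m₁ (T₁ ⁻¹' A) = m₁ A) ∧
      (∀ A : Set X, MeasurableSet A → m₂ (T₂ ⁻¹' A) = m₂ A) ∧
      m₁ {0} = 0 ∧ m₂ {0} = 0 ∧ ¬ m₁.MutuallySingular m₂ := by
  obtain ⟨x, hx, ⟨d₁, hd₁, hd₁x⟩, ⟨d₂, hd₂, hd₂x⟩⟩ := hper
  obtain ⟨m₁, hp₁, hinv₁, hz₁, hns₁, _⟩ :=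
    orbit_measure_aux T₁ h₁cont.measurable h₁lin.map_zero x hx d₁ hd₁ hd₁x
  obtain ⟨m₂, hp₂, hinv₂, hz₂, _, hpos₂⟩ :=
    orbit_measure_aux T₂ h₂cont.measurable h₂lin.map_zero x hx d₂ hd₂ hd₂x
  refine ⟨m₁, m₂, hp₁, hp₂, hinv₁, hinv₂, hz₁, hz₂, ?_⟩
  rintro ⟨s, hs, h1, h2⟩
  have hxs : x ∉ s := hns₁ s hs h1
  exact hpos₂ sᶜ hs.compl hxs h2
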